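/- Let A be a symmetric p×p real matrix and ρ > 0. Then the function Θ ↦ −logdet Θ + (ρ/2)‖Θ − A‖_F², restricted to symmetric positive definite p×p matrices, has a unique minimizer, and this minimizer is the unique symmetric positive definite Θ satisfying ρΘ − Θ⁻¹ = ρA. -/

import Mathlib

open Matrix

noncomputable def frobNorm {p : ℕ} (M : Matrix (Fin p) (Fin p) ℝ) : ℝ :=
  Real.sqrt (∑ i, ∑ j, (M i j) ^ 2)

namespace AdmmAux

variable {p : ℕ}

lemma frob_sq (M : Matrix (Fin p) (Fin p) ℝ) :
    (frobNorm M) ^ 2 = ∑ i, ∑ j, (M i j) ^ 2 := by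
  have h : (0:ℝ) ≤ ∑ i, ∑ j, (M i j) ^ 2 :=
    Finset.sum_nonneg fun i _ => Finset.sum_nonneg fun j _ => sq_nonneg _
  simpa [frobNorm] using Real.sq_sqrt h

lemma sumsq_nonneg (M : Matrix (Fin p) (Fin p) ℝ) :
    (0:ℝ) ≤ ∑ i, ∑ j, (M i j) ^ 2 :=
  Finset.sum_nonneg fun i _ => Finset.sum_nonneg fun j _ => sq_nonneg _

lemma eq_of_sumsq_le_zero {M : Matrix (Fin p) (Fin p) ℝ}
    (h : ∑ i, ∑ j, (M i j) ^ 2 ≤ 0) : M = 0 := by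
  have h0 : ∑ i, ∑ j, (M i j) ^ 2 = 0 := le_antisymm h (sumsq_nonneg M)
  ext i j
  have h1 := (Finset.sum_eq_zero_iff_of_nonneg
    (fun i _ => Finset.sum_nonneg fun j _ => sq_nonneg (M i j))).mp h0 i (Finset.mem_univ i)
  have h2 := (Finset.sum_eq_zero_iff_of_nonneg
    (fun j _ => sq_nonneg (M i j))).mp h1 j (Finset.mem_univ j)
  simpa using pow_eq_zero_iff (n := 2) (by norm_num) |>.mp h2

lemma posDef_conj' {A : Matrix (Fin p) (Fin p) ℝ} (hA : A.PosDef)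
    (B : Matrix (Fin p) (Fin p) ℝ) (hB : IsUnit B) : (Bᴴ * A * B).PosDef := by
  exact hA.conjTranspose_mul_mul_same (mulVec_injective_iff_isUnit.2 hB)

lemma posDef_conj {A : Matrix (Fin p) (Fin p) ℝ} (hA : A.PosDef)
    (B : Matrix (Fin p) (Fin p) ℝ) (hB : IsUnit B) : (B * A * Bᴴ).PosDef := by
  have hB' : IsUnit Bᴴ := by
    rw [Matrix.isUnit_iff_isUnit_det] at hB ⊢
    simpa [Matrix.det_conjTranspose] using hB
  simpa only [conjTranspose_conjTranspose] using posDef_conj' hA Bᴴ hB'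

lemma trace_symm_ip {X : Matrix (Fin p) (Fin p) ℝ} (hX : X.IsSymm)
    (Y : Matrix (Fin p) (Fin p) ℝ) :
    (X * Y).trace = ∑ i, ∑ j, X i j * Y i j := by
  have hXe : ∀ i j, X i j = X j i := fun i j => hX.apply j i
  calc (X * Y).trace = ∑ i, ∑ j, X i j * Y j i := by
        simp [Matrix.trace, Matrix.diag, Matrix.mul_apply]
    _ = ∑ j, ∑ i, X i j * Y j i := Finset.sum_comm
    _ = ∑ j, ∑ i, X j i * Y j i := by
        refine Finset.sum_congr rfl fun j _ => Finset.sum_congr rfl fun i _ => ?_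
        rw [← hXe]
    _ = ∑ i, ∑ j, X i j * Y i j := rfl

lemma logdet_le_trace {M : Matrix (Fin p) (Fin p) ℝ} (hM : M.PosDef) :
    Real.log M.det ≤ M.trace - p := by
  have hH := hM.isHermitian
  have hev : ∀ i, 0 < hH.eigenvalues i := hM.eigenvalues_pos
  have hdet : M.det = ∏ i, hH.eigenvalues i := by
    simpa using hH.det_eq_prod_eigenvalues
  have htr : M.trace = ∑ i, hH.eigenvalues i := by
    simpa using hH.trace_eq_sum_eigenvalues
  rw [hdet, htr, Real.log_prod (fun i _ => (hev i).ne')]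
  have : ∀ i ∈ Finset.univ, Real.log (hH.eigenvalues i) ≤ hH.eigenvalues i - 1 :=
    fun i _ => Real.log_le_sub_one_of_pos (hev i)
  calc ∑ i, Real.log (hH.eigenvalues i) ≤ ∑ i, (hH.eigenvalues i - 1) :=
        Finset.sum_le_sum this
    _ = (∑ i, hH.eigenvalues i) - p := by
        rw [Finset.sum_sub_distrib]
        simp

open scoped MatrixOrder in
lemma logdet_ineq {B C : Matrix (Fin p) (Fin p) ℝ} (hB : B.PosDef) (hC : C.PosDef) :
    Real.log C.det ≤ Real.log B.det + (B⁻¹ * (C - B)).trace := by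
  set S := CFC.sqrt B with hSdef
  have hS2 : S * S = B := CFC.sqrt_mul_sqrt_self B hB.posSemidef.nonneg
  have hSsym : S.IsHermitian := (CFC.sqrt_nonneg B).posSemidef.isHermitian
  have hBdet : (0:ℝ) < B.det := hB.det_pos
  have hCdet : (0:ℝ) < C.det := hC.det_pos
  have hSdet : S.det ≠ 0 := by
    intro h
    have : S.det * S.det = B.det := by rw [← Matrix.det_mul, hS2]
    rw [h, mul_zero] at this
    exact hBdet.ne' this.symm
  have hSU : IsUnit S := (Matrix.isUnit_iff_isUnit_det S).2 (isUnit_iff_ne_zero.2 hSdet)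
  have h1 : S⁻¹ * S = 1 := Matrix.nonsing_inv_mul S (isUnit_iff_ne_zero.2 hSdet)
  have h2 : S * S⁻¹ = 1 := Matrix.mul_nonsing_inv S (isUnit_iff_ne_zero.2 hSdet)
  have hSiU : IsUnit S⁻¹ := by
    rw [Matrix.isUnit_iff_isUnit_det]
    exact IsUnit.of_mul_eq_one S.det (by rw [← Matrix.det_mul, h1, Matrix.det_one])
  have hSi_herm : (S⁻¹)ᴴ = S⁻¹ := by
    rw [Matrix.conjTranspose_nonsing_inv, hSsym.eq]
  set M := S⁻¹ * C * S⁻¹ with hMdef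
  have hMpd : M.PosDef := by
    have := posDef_conj hC S⁻¹ hSiU
    rwa [hSi_herm] at this
  have hBinv : B⁻¹ = S⁻¹ * S⁻¹ := by rw [← hS2, Matrix.mul_inv_rev]
  have hdetM : M.det = C.det / B.det := by
    have hd : M.det = S⁻¹.det * C.det * S⁻¹.det := by
      rw [hMdef, Matrix.det_mul, Matrix.det_mul]
    have hdd : S⁻¹.det * S⁻¹.det = B.det⁻¹ := by
      rw [← Matrix.det_mul, ← hBinv, Matrix.det_nonsing_inv, Ring.inverse_eq_inv']
    rw [hd, div_eq_mul_inv, ← hdd]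
    ring
  have htrM : M.trace = (B⁻¹ * C).trace := by
    show (S⁻¹ * C * S⁻¹).trace = (B⁻¹ * C).trace
    rw [hBinv, Matrix.trace_mul_comm (S⁻¹ * C) S⁻¹, ← Matrix.mul_assoc]
  have key := logdet_le_trace hMpd
  have hBiB : B⁻¹ * B = 1 := Matrix.nonsing_inv_mul B (isUnit_iff_ne_zero.2 hBdet.ne')
  have htr : (B⁻¹ * (C - B)).trace = (B⁻¹ * C).trace - p := by
    rw [Matrix.mul_sub, Matrix.trace_sub, hBiB, Matrix.trace_one]
    simp
  have hlogM : Real.log M.det = Real.log C.det - Real.log B.det := by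
    rw [hdetM, Real.log_div hCdet.ne' hBdet.ne']
  rw [htr, ← htrM]
  linarith [key, hlogM]

lemma exists_sol (A : Matrix (Fin p) (Fin p) ℝ) (hA : A.IsSymm) {ρ : ℝ} (hρ : 0 < ρ) :
    ∃ Θ : Matrix (Fin p) (Fin p) ℝ, Θ.IsSymm ∧ Θ.PosDef ∧ ρ • Θ - Θ⁻¹ = ρ • A := by
  have hH : A.IsHermitian := by
    rw [Matrix.IsHermitian, Matrix.conjTranspose_eq_transpose_of_trivial]
    exact hA
  set U : Matrix (Fin p) (Fin p) ℝ := (hH.eigenvectorUnitary : Matrix (Fin p) (Fin p) ℝ) with hUdef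
  set l : Fin p → ℝ := hH.eigenvalues with hldef
  have hU1 : star U * U = 1 := Matrix.mem_unitaryGroup_iff'.mp hH.eigenvectorUnitary.2
  have hU2 : U * star U = 1 := Matrix.mem_unitaryGroup_iff.mp hH.eigenvectorUnitary.2
  have hUU : IsUnit U := by
    rw [Matrix.isUnit_iff_isUnit_det]
    exact IsUnit.of_mul_eq_one (star U).det (by rw [← Matrix.det_mul, hU2, Matrix.det_one])
  have hspec : A = U * diagonal l * star U := by
    have := hH.spectral_theorem
    simpa [RCLike.ofReal_real_eq_id] using this
  set d : Fin p → ℝ := fun i => (l i + Real.sqrt (l i ^ 2 + 4 / ρ)) / 2 with hddef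
  have hs : ∀ i, Real.sqrt (l i ^ 2 + 4 / ρ) ^ 2 = l i ^ 2 + 4 / ρ := fun i =>
    Real.sq_sqrt (by positivity)
  have hd : ∀ i, 0 < d i := by
    intro i
    have h1 : |l i| < Real.sqrt (l i ^ 2 + 4 / ρ) := by
      rw [← Real.sqrt_sq_eq_abs]
      exact Real.sqrt_lt_sqrt (sq_nonneg _) (by nlinarith [div_pos (by norm_num : (0:ℝ) < 4) hρ])
    have h2 := neg_abs_le (l i)
    have : 0 < l i + Real.sqrt (l i ^ 2 + 4 / ρ) := by linarith
    simpa [hddef] using by positivity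
  have hdne : ∀ i, d i ≠ 0 := fun i => (hd i).ne'
  have hquad : ∀ i, ρ * d i - (d i)⁻¹ = ρ * l i := by
    intro i
    have hkey : ρ * d i ^ 2 - ρ * l i * d i - 1 = 0 := by
      have hsi := hs i
      have h4 : ρ * (4 / ρ) = 4 := by field_simp
      simp only [hddef]
      linear_combination (ρ / 4) * hsi + (1 / 4) * h4
    have hdi := hdne i
    field_simp
    nlinarith [hkey]
  set D : Matrix (Fin p) (Fin p) ℝ := diagonal d with hDdef
  set D' : Matrix (Fin p) (Fin p) ℝ := diagonal (fun i => (d i)⁻¹) with hD'def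
  have hDpd : D.PosDef := (Matrix.posDef_diagonal_iff).2 hd
  have hpd : (U * D * star U).PosDef := by
    have := posDef_conj hDpd U hUU
    simpa [Matrix.star_eq_conjTranspose] using this
  refine ⟨U * D * star U, ?_, hpd, ?_⟩
  · rw [Matrix.IsSymm, ← Matrix.conjTranspose_eq_transpose_of_trivial]
    exact hpd.isHermitian
  · have hDD' : D * D' = 1 := by
      rw [hDdef, hD'def, Matrix.diagonal_mul_diagonal,
        show (fun i => d i * (d i)⁻¹) = fun _ : Fin p => (1:ℝ) from
          funext fun i => mul_inv_cancel₀ (hdne i)]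
      exact Matrix.diagonal_one
    have hmul : (U * D * star U) * (U * D' * star U) = 1 := by
      have e1 : (U * D * star U) * (U * D' * star U) = U * D * (star U * U) * D' * star U := by
        simp only [Matrix.mul_assoc]
      rw [e1, hU1, Matrix.mul_one, Matrix.mul_assoc U D D', hDD', Matrix.mul_one, hU2]
    have hinv : (U * D * star U)⁻¹ = U * D' * star U := Matrix.inv_eq_right_inv hmul
    rw [hinv, hspec]
    have key : U * (ρ • D - D') * star U = ρ • (U * D * star U) - U * D' * star U := by
      simp [Matrix.mul_sub, Matrix.sub_mul, Matrix.mul_smul, Matrix.smul_mul]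
    rw [← key]
    have hdiag : ρ • D - D' = diagonal (fun i => ρ * l i) := by
      rw [hDdef, hD'def, ← Matrix.diagonal_smul, Matrix.diagonal_sub]
      exact congrArg Matrix.diagonal (funext fun i => hquad i)
    rw [hdiag,
      show ρ • (U * diagonal l * star U) = U * (ρ • diagonal l) * star U from by
        simp [Matrix.mul_smul, Matrix.smul_mul],
      show (fun i => ρ * l i) = ρ • l from funext fun i => rfl,
      Matrix.diagonal_smul]

lemma sol_le {A : Matrix (Fin p) (Fin p) ℝ} {ρ : ℝ}
    {B : Matrix (Fin p) (Fin p) ℝ} (hBs : B.IsSymm) (hBpd : B.PosDef)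
    (heq : ρ • B - B⁻¹ = ρ • A)
    {C : Matrix (Fin p) (Fin p) ℝ} (hCpd : C.PosDef) :
    -Real.log B.det + ρ / 2 * (frobNorm (B - A)) ^ 2
        + ρ / 2 * (∑ i, ∑ j, ((C - B) i j) ^ 2)
      ≤ -Real.log C.det + ρ / 2 * (frobNorm (C - A)) ^ 2 := by
  have hBinv_symm : (B⁻¹).IsSymm := by
    rw [Matrix.IsSymm, Matrix.transpose_nonsing_inv, hBs.eq]
  have hlog := logdet_ineq hBpd hCpd
  have htr := trace_symm_ip hBinv_symm (C - B)
  have hent : ∀ i j, (B⁻¹) i j = ρ * (B i j - A i j) := by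
    intro i j
    have h := congrFun (congrFun heq i) j
    simp only [Matrix.sub_apply, Matrix.smul_apply, smul_eq_mul] at h
    linarith
  have hT : (B⁻¹ * (C - B)).trace = ρ * ∑ i, ∑ j, ((C - B) i j * (B - A) i j) := by
    rw [htr, Finset.mul_sum]
    refine Finset.sum_congr rfl fun i _ => ?_
    rw [Finset.mul_sum]
    refine Finset.sum_congr rfl fun j _ => ?_
    rw [hent i j]
    simp only [Matrix.sub_apply]
    ring
  have hlog2 : Real.log C.det ≤ Real.log B.det
      + ρ * ∑ i, ∑ j, ((C - B) i j * (B - A) i j) := by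
    rw [← hT]; exact hlog
  rw [frob_sq, frob_sq]
  have hexp : ∑ i, ∑ j, ((C - A) i j) ^ 2
      = (∑ i, ∑ j, ((C - B) i j) ^ 2)
        + (2 * ∑ i, ∑ j, ((C - B) i j * (B - A) i j))
        + ∑ i, ∑ j, ((B - A) i j) ^ 2 := by
    have h1 : ∀ i, ∀ j, ((C - A) i j) ^ 2
        = ((C - B) i j) ^ 2 + (2 * ((C - B) i j * (B - A) i j) + ((B - A) i j) ^ 2) := by
      intro i j
      simp only [Matrix.sub_apply]
      ring
    calc ∑ i, ∑ j, ((C - A) i j) ^ 2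
        = ∑ i, ∑ j, (((C - B) i j) ^ 2
            + (2 * ((C - B) i j * (B - A) i j) + ((B - A) i j) ^ 2)) :=
          Finset.sum_congr rfl fun i _ => Finset.sum_congr rfl fun j _ => h1 i j
      _ = _ := by
          simp only [Finset.sum_add_distrib, ← Finset.mul_sum]
          ring
  rw [hexp]
  nlinarith [hlog2]


end AdmmAux

open AdmmAux in
theorem admm_theta_update_is_minimizer {p : ℕ}
    (A : Matrix (Fin p) (Fin p) ℝ) (hA : A.IsSymm) (ρ : ℝ) (hρ : 0 < ρ) :
    (∃! Θ : Matrix (Fin p) (Fin p) ℝ, Θ.IsSymm ∧ Θ.PosDef ∧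
        ∀ Θ' : Matrix (Fin p) (Fin p) ℝ, Θ'.IsSymm → Θ'.PosDef →
          -Real.log Θ.det + ρ / 2 * (frobNorm (Θ - A)) ^ 2
            ≤ -Real.log Θ'.det + ρ / 2 * (frobNorm (Θ' - A)) ^ 2) ∧
    ∀ Θ : Matrix (Fin p) (Fin p) ℝ, Θ.IsSymm → Θ.PosDef →
      (∀ Θ' : Matrix (Fin p) (Fin p) ℝ, Θ'.IsSymm → Θ'.PosDef →
          -Real.log Θ.det + ρ / 2 * (frobNorm (Θ - A)) ^ 2
            ≤ -Real.log Θ'.det + ρ / 2 * (frobNorm (Θ' - A)) ^ 2) →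
      (ρ • Θ - Θ⁻¹ = ρ • A ∧
        ∀ Θ'' : Matrix (Fin p) (Fin p) ℝ, Θ''.IsSymm → Θ''.PosDef →
          ρ • Θ'' - Θ''⁻¹ = ρ • A → Θ'' = Θ) := by
  obtain ⟨Θs, hs, hpd, heq⟩ := exists_sol A hA hρ
  have hhalf : (0:ℝ) < ρ / 2 := by linarith
  -- squeeze: if B solves the equation and C is a minimizer then C = B
  have squeeze : ∀ B : Matrix (Fin p) (Fin p) ℝ, B.IsSymm → B.PosDef →
      ρ • B - B⁻¹ = ρ • A → ∀ C : Matrix (Fin p) (Fin p) ℝ, C.PosDef →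
      (-Real.log C.det + ρ / 2 * (frobNorm (C - A)) ^ 2
        ≤ -Real.log B.det + ρ / 2 * (frobNorm (B - A)) ^ 2) → C = B := by
    intro B hBs hBpd hBeq C hCpd hle
    have h1 := sol_le hBs hBpd hBeq hCpd
    have hn0 : (0:ℝ) ≤ ∑ i, ∑ j, ((C - B) i j) ^ 2 := sumsq_nonneg _
    have h3 : ρ / 2 * (∑ i, ∑ j, ((C - B) i j) ^ 2) ≤ 0 := by linarith
    have h4 : ρ / 2 * (∑ i, ∑ j, ((C - B) i j) ^ 2) = 0 :=
      le_antisymm h3 (mul_nonneg hhalf.le hn0)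
    have h5 : ∑ i, ∑ j, ((C - B) i j) ^ 2 ≤ 0 := by
      rcases mul_eq_zero.mp h4 with h | h
      · exact absurd h hhalf.ne'
      · exact le_of_eq h
    have h6 : C - B = 0 := eq_of_sumsq_le_zero h5
    exact sub_eq_zero.mp h6
  have hmin : ∀ Θ' : Matrix (Fin p) (Fin p) ℝ, Θ'.IsSymm → Θ'.PosDef →
      -Real.log Θs.det + ρ / 2 * (frobNorm (Θs - A)) ^ 2
        ≤ -Real.log Θ'.det + ρ / 2 * (frobNorm (Θ' - A)) ^ 2 := by
    intro Θ' h's h'pd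
    have h1 := sol_le hs hpd heq h'pd
    have hn0 : (0:ℝ) ≤ ∑ i, ∑ j, ((Θ' - Θs) i j) ^ 2 := sumsq_nonneg _
    nlinarith [mul_nonneg hhalf.le hn0]
  constructor
  · refine ⟨Θs, ⟨hs, hpd, hmin⟩, ?_⟩
    rintro Θ ⟨hΘs, hΘpd, hΘmin⟩
    exact squeeze Θs hs hpd heq Θ hΘpd (hΘmin Θs hs hpd)
  · intro Θ hΘs hΘpd hΘmin
    have hEq : Θ = Θs := squeeze Θs hs hpd heq Θ hΘpd (hΘmin Θs hs hpd)
    subst hEq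
    refine ⟨heq, ?_⟩
    intro Θ'' h''s h''pd h''eq
    exact (squeeze Θ'' h''s h''pd h''eq Θ hpd (hΘmin Θ'' h''s h''pd)).symm
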